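/- Let u_1,…,u_n ∈ ℂ be pairwise distinct, A ∈ M_n(ℂ), j ∈ {1,…,n}, and let D ∈ M_n(ℂ) be any diagonal matrix. Define ω ∈ M_n(ℂ) by ω_{ab} = A_{ab}(δ_{aj} − δ_{bj})/(u_a − u_b) for a ≠ b and ω_{aa} = D_{aa}. Then every diagonal entry of the commutator [ω, A] vanishes: ([ω, A])_{kk} = 0 for all k. Consequently, if U ⊆ ℂ^n is open and connected, avoids all diagonals u_a = u_b, and A : U → M_n(ℂ) is differentiable with ∂A/∂u_j(u) = [ω_j(u), A(u)] for every j, where each ω_j(u) has the above form (with u-dependent diagonal), then every diagonal entry A_{kk} is constant on U. -/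
import Mathlib


open Matrix

/-- Partial derivative in the `j`-th coordinate direction of a matrix-valued function
of `u ∈ ℂ^N`, computed entrywise. -/
noncomputable def mpdv {N n : ℕ} (j : Fin N) (A : (Fin N → ℂ) → Matrix (Fin n) (Fin n) ℂ)
    (u : Fin N → ℂ) : Matrix (Fin n) (Fin n) ℂ :=
  Matrix.of fun a b => fderiv ℂ (fun v => A v a b) u (Pi.single j 1)

/-- Final assertion of Lemma B.2 / Proposition 2.6(D): if `ω` has off-diagonal entries
`A_{ab}(δ_{aj} − δ_{bj})/(u_a − u_b)` and arbitrary diagonal, then every diagonal entry of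
`[ω, A]` vanishes; consequently, for a differentiable `A : U → M_n(ℂ)` on an open
connected `U` avoiding all diagonals satisfying `∂A/∂u_j = [ω_j, A]` with each `ω_j` of
this form, every diagonal entry `A_{kk}` is constant on `U`. -/
lemma comm_diag_zero {n : ℕ} (v : Fin n → ℂ) (hv : ∀ a b : Fin n, a ≠ b → v a ≠ v b)
    (B : Matrix (Fin n) (Fin n) ℂ) (d : Fin n → ℂ) (j k : Fin n) :
    (((Matrix.of fun a b =>
          if a = b then d a
          else B a b * ((if a = j then 1 else 0) - (if b = j then 1 else 0))
            / (v a - v b)) * B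
      - B * (Matrix.of fun a b =>
          if a = b then d a
          else B a b * ((if a = j then 1 else 0) - (if b = j then 1 else 0))
            / (v a - v b)))) k k = 0 := by
  simp only [Matrix.sub_apply, Matrix.mul_apply, ← Finset.sum_sub_distrib]
  apply Finset.sum_eq_zero
  intro a _
  simp only [Matrix.of_apply]
  by_cases hak : a = k
  · subst hak; simp [mul_comm]
  · have h1 : (k : Fin n) ≠ a := fun h => hak h.symm
    have h3 : v a ≠ v k := hv a k hak
    rw [if_neg h1, if_neg hak]
    have hsub : v k - v a ≠ 0 := sub_ne_zero.mpr (hv k a h1)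
    have hsub' : v a - v k ≠ 0 := sub_ne_zero.mpr h3
    field_simp
    ring

theorem stmt8 {n : ℕ}
    (U : Set (Fin n → ℂ)) (hU : IsOpen U) (hconn : IsPreconnected U)
    (hdist : ∀ u ∈ U, ∀ a b : Fin n, a ≠ b → u a ≠ u b)
    (A : (Fin n → ℂ) → Matrix (Fin n) (Fin n) ℂ)
    (hA : ∀ a b, DifferentiableOn ℂ (fun u => A u a b) U)
    (ωd : Fin n → (Fin n → ℂ) → Fin n → ℂ)
    (hLax : ∀ j : Fin n, ∀ u ∈ U,
      mpdv j A u =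
        (Matrix.of fun a b =>
            if a = b then ωd j u a
            else A u a b * ((if a = j then 1 else 0) - (if b = j then 1 else 0))
              / (u a - u b)) * A u
        - A u * (Matrix.of fun a b =>
            if a = b then ωd j u a
            else A u a b * ((if a = j then 1 else 0) - (if b = j then 1 else 0))
              / (u a - u b))) :
    (∀ v : Fin n → ℂ, (∀ a b : Fin n, a ≠ b → v a ≠ v b) →
      ∀ (B : Matrix (Fin n) (Fin n) ℂ) (d : Fin n → ℂ) (j k : Fin n),
        (((Matrix.of fun a b =>
              if a = b then d a
              else B a b * ((if a = j then 1 else 0) - (if b = j then 1 else 0))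
                / (v a - v b)) * B
          - B * (Matrix.of fun a b =>
              if a = b then d a
              else B a b * ((if a = j then 1 else 0) - (if b = j then 1 else 0))
                / (v a - v b)))) k k = 0)
    ∧ (∀ k : Fin n, ∀ u ∈ U, ∀ w ∈ U, A u k k = A w k k) := by
  refine ⟨fun v hv B d j k => comm_diag_zero v hv B d j k, ?_⟩
  intro k
  -- the derivative of the diagonal entry vanishes on U
  have hzero : ∀ u ∈ U, fderiv ℂ (fun v => A v k k) u = 0 := by
    intro u hu
    apply ContinuousLinearMap.ext
    intro x
    have hx : x = ∑ i, x i • (Pi.single i (1 : ℂ) : Fin n → ℂ) := by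
      funext m
      simp [Finset.sum_apply, Pi.single_apply]
    have key : ∀ j : Fin n, fderiv ℂ (fun v => A v k k) u (Pi.single j 1) = 0 := by
      intro j
      have h1 : (mpdv j A u) k k = 0 := by
        rw [hLax j u hu]
        exact comm_diag_zero u (hdist u hu) (A u) (ωd j u) j k
      exact h1
    calc fderiv ℂ (fun v => A v k k) u x
        = fderiv ℂ (fun v => A v k k) u (∑ i, x i • (Pi.single i (1 : ℂ) : Fin n → ℂ)) := by rw [← hx]
      _ = ∑ i, x i • fderiv ℂ (fun v => A v k k) u ((Pi.single i (1 : ℂ) : Fin n → ℂ)) := by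
          rw [map_sum]; simp only [_root_.map_smul]
      _ = 0 := by simp [key]
  -- local constancy
  have hloc : ∀ u ∈ U, ∃ ε > 0, Metric.ball u ε ⊆ U ∧
      ∀ w ∈ Metric.ball u ε, A w k k = A u k k := by
    intro u hu
    obtain ⟨ε, hε, hball⟩ := Metric.isOpen_iff.mp hU u hu
    refine ⟨ε, hε, hball, fun w hw => ?_⟩
    have hdiff : DifferentiableOn ℂ (fun v => A v k k) (Metric.ball u ε) :=
      (hA k k).mono hball
    refine (convex_ball u ε).is_const_of_fderivWithin_eq_zero hdiff (fun x hx => ?_) hw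
      (Metric.mem_ball_self hε)
    rw [fderivWithin_of_isOpen Metric.isOpen_ball hx]
    exact hzero x (hball hx)
  -- clopen argument on the preconnected set
  intro u hu w hw
  by_contra hne
  set V : Set (Fin n → ℂ) := {z | z ∈ U ∧ A z k k = A u k k} with hV
  set W : Set (Fin n → ℂ) := {z | z ∈ U ∧ A z k k ≠ A u k k} with hW
  have hVopen : IsOpen V := by
    rw [isOpen_iff_mem_nhds]
    rintro z ⟨hzU, hzval⟩
    obtain ⟨ε, hε, hball, hconst⟩ := hloc z hzU
    refine Filter.mem_of_superset (Metric.ball_mem_nhds z hε) ?_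
    intro y hy
    exact ⟨hball hy, by rw [hconst y hy, hzval]⟩
  have hWopen : IsOpen W := by
    rw [isOpen_iff_mem_nhds]
    rintro z ⟨hzU, hzval⟩
    obtain ⟨ε, hε, hball, hconst⟩ := hloc z hzU
    refine Filter.mem_of_superset (Metric.ball_mem_nhds z hε) ?_
    intro y hy
    exact ⟨hball hy, by rw [hconst y hy]; exact hzval⟩
  have hsub : U ⊆ V ∪ W := fun z hz => by
    by_cases h : A z k k = A u k k
    · exact Or.inl ⟨hz, h⟩
    · exact Or.inr ⟨hz, h⟩
  have hVne : (U ∩ V).Nonempty := ⟨u, hu, hu, rfl⟩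
  have hWne : (U ∩ W).Nonempty := ⟨w, hw, hw, fun h => hne h.symm⟩
  obtain ⟨z, _, ⟨_, hz1⟩, ⟨_, hz2⟩⟩ := hconn V W hVopen hWopen hsub hVne hWne
  exact hz2 hz1
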